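/- Suppose that ∫_Z u dμ ≤ 0 for every continuous convex function u : X → ℝ that is nondecreasing in each coordinate, ∫_W u dμ ≤ 0 for every continuous convex function u : X → ℝ that is nonincreasing in the first coordinate and nondecreasing in the second coordinate, and ∫_Y u dμ ≤ 0 for every continuous convex function u : X → ℝ that is nonincreasing in each coordinate. Then: (i) μ(Z) = μ(W) = μ(Y) = 0; (ii) for every t ∈ [a₁, p_g], ∫_t^{p_g} M_Z(s) ds ≥ 0, where M_Z(s) := μ(([a₁,s] × [a₂,b₂]) ∩ Z). -/

import Mathlib

open MeasureTheory Set

noncomputable section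

/-- The type rectangle `X = [a₁,b₁] × [a₂,b₂] ⊆ ℝ²`. -/
def rect (a₁ b₁ a₂ b₂ : ℝ) : Set (ℝ × ℝ) := Icc a₁ b₁ ×ˢ Icc a₂ b₂

/-- First partial derivative `∂₁f(x)`. -/
def d1 (f : ℝ × ℝ → ℝ) (x : ℝ × ℝ) : ℝ := deriv (fun s => f (s, x.2)) x.1

/-- Second partial derivative `∂₂f(x)`. -/
def d2 (f : ℝ × ℝ → ℝ) (x : ℝ × ℝ) : ℝ := deriv (fun s => f (x.1, s)) x.2

/-- The interior density of the transformed measure `μ`: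
`x₁·∂₁f(x) + (x₂+k)·∂₂f(x) + 3·f(x)`. -/
def dens (k : ℝ) (f : ℝ × ℝ → ℝ) (x : ℝ × ℝ) : ℝ :=
  x.1 * d1 f x + (x.2 + k) * d2 f x + 3 * f x

/-- The integral `∫ g dμ` of a function `g` against the transformed measure `μ` on
`X = [a₁,b₁] × [a₂,b₂]` with constant third-party payment `k`: a unit atom at the
lower-left corner `x̲ = (a₁,a₂)`, signed line densities on the four edges of `X`, and
(negated) interior density `dens k f` against two-dimensional Lebesgue measure. -/
def muInt (a₁ b₁ a₂ b₂ k : ℝ) (f g : ℝ × ℝ → ℝ) : ℝ :=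
  g (a₁, a₂)
    - (a₂ + k) * ∫ s in a₁..b₁, g (s, a₂) * f (s, a₂)
    + (b₂ + k) * ∫ s in a₁..b₁, g (s, b₂) * f (s, b₂)
    + b₁ * ∫ s in a₂..b₂, g (b₁, s) * f (b₁, s)
    - a₁ * ∫ s in a₂..b₂, g (a₁, s) * f (a₁, s)
    - ∫ x in rect a₁ b₁ a₂ b₂, g x * dens k f x

/-- `μ(A)` for a set `A ⊆ X`, obtained by integrating the indicator of `A` against `μ`. -/
def muSet (a₁ b₁ a₂ b₂ k : ℝ) (f : ℝ × ℝ → ℝ) (A : Set (ℝ × ℝ)) : ℝ :=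
  muInt a₁ b₁ a₂ b₂ k f (A.indicator 1)

/-- `u` is nondecreasing in the first coordinate on `X`. -/
def IncAlong1 (X : Set (ℝ × ℝ)) (u : ℝ × ℝ → ℝ) : Prop :=
  ∀ s s' t : ℝ, (s, t) ∈ X → (s', t) ∈ X → s ≤ s' → u (s, t) ≤ u (s', t)

/-- `u` is nondecreasing in the second coordinate on `X`. -/
def IncAlong2 (X : Set (ℝ × ℝ)) (u : ℝ × ℝ → ℝ) : Prop :=
  ∀ s t t' : ℝ, (s, t) ∈ X → (s, t') ∈ X → t ≤ t' → u (s, t) ≤ u (s, t')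

/-- `u` is nonincreasing in the first coordinate on `X`. -/
def DecAlong1 (X : Set (ℝ × ℝ)) (u : ℝ × ℝ → ℝ) : Prop :=
  ∀ s s' t : ℝ, (s, t) ∈ X → (s', t) ∈ X → s ≤ s' → u (s', t) ≤ u (s, t)

/-- `u` is nonincreasing in the second coordinate on `X`. -/
def DecAlong2 (X : Set (ℝ × ℝ)) (u : ℝ × ℝ → ℝ) : Prop :=
  ∀ s t t' : ℝ, (s, t) ∈ X → (s, t') ∈ X → t ≤ t' → u (s, t') ≤ u (s, t)

/-- The feasible class `𝒰`: continuous, convex, nondecreasing in each coordinate,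
and 1-Lipschitz with respect to the `ℓ¹` norm, on `X`. -/
def FeasibleU (X : Set (ℝ × ℝ)) (u : ℝ × ℝ → ℝ) : Prop :=
  ContinuousOn u X ∧ ConvexOn ℝ X u ∧ IncAlong1 X u ∧ IncAlong2 X u ∧
    ∀ x ∈ X, ∀ y ∈ X, |u x - u y| ≤ |x.1 - y.1| + |x.2 - y.2|

end

noncomputable section
/-- Region of types choosing the default option under the Ad-Tiered Posted Price. -/
def Zat (a₁ b₁ a₂ b₂ pg psb : ℝ) : Set (ℝ × ℝ) :=
  {x ∈ rect a₁ b₁ a₂ b₂ | x.1 ≤ pg ∧ x.2 ≤ psb - x.1}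

/-- Region of types choosing the ad-supported option under the Ad-Tiered Posted Price. -/
def Wat (a₁ b₁ a₂ b₂ pg psb : ℝ) : Set (ℝ × ℝ) :=
  {x ∈ rect a₁ b₁ a₂ b₂ | pg < x.1 ∧ x.2 ≤ psb - pg}

/-- Region of types choosing the ad-free option under the Ad-Tiered Posted Price. -/
def Yat (a₁ b₁ a₂ b₂ pg psb : ℝ) : Set (ℝ × ℝ) :=
  rect a₁ b₁ a₂ b₂ \ (Zat a₁ b₁ a₂ b₂ pg psb ∪ Wat a₁ b₁ a₂ b₂ pg psb)

/-- `M_Z(s) = μ(([a₁,s] × [a₂,b₂]) ∩ Z)` for the Ad-Tiered mechanism. -/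
def MZat (a₁ b₁ a₂ b₂ k : ℝ) (f : ℝ × ℝ → ℝ) (pg psb s : ℝ) : ℝ :=
  muSet a₁ b₁ a₂ b₂ k f ((Icc a₁ s ×ˢ Icc a₂ b₂) ∩ Zat a₁ b₁ a₂ b₂ pg psb)

end

noncomputable section AuxProofs

open intervalIntegral

/-- The test function `u_t(x) = max(0, x₁ - t)`. -/
def utAux (t : ℝ) (x : ℝ × ℝ) : ℝ := max 0 (x.1 - t)

/-- The truncated region `([a₁,s] × [a₂,b₂]) ∩ Z`. -/
def AsetAux (a₁ b₁ a₂ b₂ pg psb s : ℝ) : Set (ℝ × ℝ) :=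
  (Icc a₁ s ×ˢ Icc a₂ b₂) ∩ Zat a₁ b₁ a₂ b₂ pg psb

lemma measurableSet_ZatAux (a₁ b₁ a₂ b₂ pg psb : ℝ) :
    MeasurableSet (Zat a₁ b₁ a₂ b₂ pg psb) := by
  have h : Zat a₁ b₁ a₂ b₂ pg psb =
      rect a₁ b₁ a₂ b₂ ∩ ({x : ℝ × ℝ | x.1 ≤ pg} ∩ {x : ℝ × ℝ | x.2 ≤ psb - x.1}) := by
    ext x
    simp only [Zat, Set.mem_sep_iff, Set.mem_inter_iff, Set.mem_setOf_eq]
    try tauto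
  rw [h]
  exact (measurableSet_Icc.prod measurableSet_Icc).inter
    ((measurableSet_le measurable_fst measurable_const).inter
      (measurableSet_le measurable_snd (measurable_const.sub measurable_fst)))

lemma pointwiseAux {a₁ b₁ a₂ b₂ pg psb t : ℝ} (htp : t ≤ pg) (x : ℝ × ℝ) :
    (∫ s in t..pg, (AsetAux a₁ b₁ a₂ b₂ pg psb s).indicator 1 x) =
      (pg - t) * (Zat a₁ b₁ a₂ b₂ pg psb).indicator 1 x
        - (Zat a₁ b₁ a₂ b₂ pg psb).indicator (utAux t) x := by
  by_cases hx : x ∈ Zat a₁ b₁ a₂ b₂ pg psb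
  · have hx1 : a₁ ≤ x.1 := hx.1.1.1
    have hx1b : x.1 ≤ pg := hx.2.1
    have hx2 : x.2 ∈ Icc a₂ b₂ := hx.1.2
    have hfun : ∀ s : ℝ, (AsetAux a₁ b₁ a₂ b₂ pg psb s).indicator (1 : ℝ × ℝ → ℝ) x
        = (Ici x.1).indicator (1 : ℝ → ℝ) s := by
      intro s
      by_cases hs : x.1 ≤ s
      · have hmem : x ∈ AsetAux a₁ b₁ a₂ b₂ pg psb s := ⟨⟨⟨hx1, hs⟩, hx2⟩, hx⟩
        rw [Set.indicator_of_mem hmem, Set.indicator_of_mem (show s ∈ Ici x.1 from hs)]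
        rfl
      · have hmem : x ∉ AsetAux a₁ b₁ a₂ b₂ pg psb s := fun h => hs h.1.1.2
        rw [Set.indicator_of_notMem hmem,
          Set.indicator_of_notMem (show s ∉ Ici x.1 from hs)]
    rw [intervalIntegral.integral_of_le htp]
    simp only [hfun]
    rw [MeasureTheory.setIntegral_indicator measurableSet_Ici]
    simp only [Pi.one_apply, MeasureTheory.setIntegral_const, smul_eq_mul, mul_one]
    rw [Set.indicator_of_mem hx, Set.indicator_of_mem hx, Pi.one_apply]
    by_cases hxt : x.1 ≤ t
    · have hset : Ioc t pg ∩ Ici x.1 = Ioc t pg := by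
        ext s
        simp only [Set.mem_inter_iff, Set.mem_Ioc, Set.mem_Ici]
        constructor
        · tauto
        · intro h; exact ⟨h, by linarith [h.1]⟩
      rw [hset, Real.volume_real_Ioc_of_le (by linarith)]
      have : utAux t x = 0 := max_eq_left (by linarith)
      rw [this]; ring
    · push_neg at hxt
      have hset : Ioc t pg ∩ Ici x.1 = Icc x.1 pg := by
        ext s
        simp only [Set.mem_inter_iff, Set.mem_Ioc, Set.mem_Ici, Set.mem_Icc]
        constructor
        · rintro ⟨⟨h1, h2⟩, h3⟩; exact ⟨h3, h2⟩
        · rintro ⟨h1, h2⟩; exact ⟨⟨by linarith, h2⟩, h1⟩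
      rw [hset, Real.volume_real_Icc_of_le (by linarith)]
      have : utAux t x = x.1 - t := max_eq_right (by linarith)
      rw [this]; ring
  · have hfun : ∀ s : ℝ, (AsetAux a₁ b₁ a₂ b₂ pg psb s).indicator (1 : ℝ × ℝ → ℝ) x = 0 := by
      intro s
      exact Set.indicator_of_notMem (fun h => hx h.2) _
    simp only [hfun]
    rw [Set.indicator_of_notMem hx, Set.indicator_of_notMem hx]
    simp

lemma monoAux (a₁ b₁ a₂ b₂ pg psb : ℝ) (x : ℝ × ℝ) :
    Monotone (fun s => (AsetAux a₁ b₁ a₂ b₂ pg psb s).indicator (1 : ℝ × ℝ → ℝ) x) := by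
  intro s s' hss
  dsimp only
  by_cases h : x ∈ AsetAux a₁ b₁ a₂ b₂ pg psb s
  · have h' : x ∈ AsetAux a₁ b₁ a₂ b₂ pg psb s' :=
      ⟨⟨⟨h.1.1.1, le_trans h.1.1.2 hss⟩, h.1.2⟩, h.2⟩
    rw [Set.indicator_of_mem h, Set.indicator_of_mem h']
  · rw [Set.indicator_of_notMem h]
    by_cases h' : x ∈ AsetAux a₁ b₁ a₂ b₂ pg psb s'
    · rw [Set.indicator_of_mem h']; norm_num
    · rw [Set.indicator_of_notMem h']

lemma masterAux {α : Type} [MeasurableSpace α] (ν : MeasureTheory.Measure α)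
    [MeasureTheory.IsFiniteMeasure ν]
    {a₁ b₁ a₂ b₂ pg psb t : ℝ} (htp : t ≤ pg)
    (e : α → ℝ × ℝ) (he : Measurable e) (h : α → ℝ)
    (hh : MeasureTheory.AEStronglyMeasurable h ν) (M : ℝ) (hM0 : 0 ≤ M)
    (hM : ∀ p, e p ∈ rect a₁ b₁ a₂ b₂ → |h p| ≤ M) :
    IntervalIntegrable
        (fun s => ∫ p, (AsetAux a₁ b₁ a₂ b₂ pg psb s).indicator 1 (e p) * h p ∂ν)
        MeasureTheory.volume t pg ∧
      (∫ s in t..pg, ∫ p, (AsetAux a₁ b₁ a₂ b₂ pg psb s).indicator 1 (e p) * h p ∂ν)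
        = (pg - t) * (∫ p, (Zat a₁ b₁ a₂ b₂ pg psb).indicator 1 (e p) * h p ∂ν)
          - ∫ p, (Zat a₁ b₁ a₂ b₂ pg psb).indicator (utAux t) (e p) * h p ∂ν := by
  haveI : MeasureTheory.IsFiniteMeasure (MeasureTheory.volume.restrict (Ioc t pg)) := by
    constructor
    rw [MeasureTheory.Measure.restrict_apply_univ, Real.volume_Ioc]
    exact ENNReal.ofReal_lt_top
  have hZmeas := measurableSet_ZatAux a₁ b₁ a₂ b₂ pg psb
  -- measurability of the joint indicator set
  have hE : MeasurableSet {q : ℝ × α | e q.2 ∈ AsetAux a₁ b₁ a₂ b₂ pg psb q.1} := by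
    have heq : {q : ℝ × α | e q.2 ∈ AsetAux a₁ b₁ a₂ b₂ pg psb q.1}
        = {q : ℝ × α | (e q.2).1 ≤ q.1} ∩
          ((fun q : ℝ × α => e q.2) ⁻¹'
            {y : ℝ × ℝ | a₁ ≤ y.1 ∧ y.2 ∈ Icc a₂ b₂ ∧ y ∈ Zat a₁ b₁ a₂ b₂ pg psb}) := by
      ext q
      simp only [AsetAux, Set.mem_setOf_eq, Set.mem_inter_iff, Set.mem_prod, Set.mem_Icc,
        Set.mem_preimage]
      tauto
    rw [heq]
    have hS : MeasurableSet
        {y : ℝ × ℝ | a₁ ≤ y.1 ∧ y.2 ∈ Icc a₂ b₂ ∧ y ∈ Zat a₁ b₁ a₂ b₂ pg psb} := by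
      rw [Set.setOf_and, Set.setOf_and]
      exact (measurableSet_le measurable_const measurable_fst).inter
        ((measurable_snd measurableSet_Icc).inter hZmeas)
    exact (measurableSet_le ((he.comp measurable_snd).fst) measurable_fst).inter
      ((he.comp measurable_snd) hS)
  -- product integrability
  have hFmeas : MeasureTheory.AEStronglyMeasurable
      (fun q : ℝ × α => (AsetAux a₁ b₁ a₂ b₂ pg psb q.1).indicator (1 : ℝ × ℝ → ℝ) (e q.2) * h q.2)
      ((MeasureTheory.volume.restrict (Ioc t pg)).prod ν) := by
    have h1 : (fun q : ℝ × α => (AsetAux a₁ b₁ a₂ b₂ pg psb q.1).indicator (1 : ℝ × ℝ → ℝ) (e q.2))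
        = {q : ℝ × α | e q.2 ∈ AsetAux a₁ b₁ a₂ b₂ pg psb q.1}.indicator (fun _ => (1:ℝ)) := by
      funext q
      by_cases hq : e q.2 ∈ AsetAux a₁ b₁ a₂ b₂ pg psb q.1
      · rw [Set.indicator_of_mem hq, Set.indicator_of_mem (by exact hq)]; rfl
      · rw [Set.indicator_of_notMem hq, Set.indicator_of_notMem (by exact hq)]
    have hbase : MeasureTheory.AEStronglyMeasurable
        (fun q : ℝ × α => (AsetAux a₁ b₁ a₂ b₂ pg psb q.1).indicator (1 : ℝ × ℝ → ℝ) (e q.2))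
        ((MeasureTheory.volume.restrict (Ioc t pg)).prod ν) := by
      rw [h1]; exact (measurable_const.indicator hE).aestronglyMeasurable
    exact hbase.mul hh.comp_snd
  have hFbd : ∀ q : ℝ × α,
      ‖(AsetAux a₁ b₁ a₂ b₂ pg psb q.1).indicator (1 : ℝ × ℝ → ℝ) (e q.2) * h q.2‖ ≤ M := by
    intro q
    by_cases hq : e q.2 ∈ AsetAux a₁ b₁ a₂ b₂ pg psb q.1
    · rw [Set.indicator_of_mem hq]
      simp only [Pi.one_apply, one_mul, Real.norm_eq_abs]
      exact hM _ hq.2.1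
    · rw [Set.indicator_of_notMem hq, zero_mul, norm_zero]
      exact hM0
  have hFint : MeasureTheory.Integrable
      (fun q : ℝ × α => (AsetAux a₁ b₁ a₂ b₂ pg psb q.1).indicator (1 : ℝ × ℝ → ℝ) (e q.2) * h q.2)
      ((MeasureTheory.volume.restrict (Ioc t pg)).prod ν) :=
    MeasureTheory.Integrable.mono' (MeasureTheory.integrable_const M) hFmeas
      (Filter.Eventually.of_forall hFbd)
  -- integrabilities over ν
  have hint1 : MeasureTheory.Integrable
      (fun p => (Zat a₁ b₁ a₂ b₂ pg psb).indicator (1 : ℝ × ℝ → ℝ) (e p) * h p) ν := by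
    have hm : (fun p => (Zat a₁ b₁ a₂ b₂ pg psb).indicator (1 : ℝ × ℝ → ℝ) (e p))
        = (e ⁻¹' Zat a₁ b₁ a₂ b₂ pg psb).indicator (fun _ => (1:ℝ)) := by
      funext p
      by_cases hp : e p ∈ Zat a₁ b₁ a₂ b₂ pg psb
      · rw [Set.indicator_of_mem hp, Set.indicator_of_mem (by exact hp)]; rfl
      · rw [Set.indicator_of_notMem hp, Set.indicator_of_notMem (by exact hp)]
    have hbase : MeasureTheory.AEStronglyMeasurable
        (fun p => (Zat a₁ b₁ a₂ b₂ pg psb).indicator (1 : ℝ × ℝ → ℝ) (e p)) ν := by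
      rw [hm]; exact (measurable_const.indicator (he hZmeas)).aestronglyMeasurable
    refine MeasureTheory.Integrable.mono' (MeasureTheory.integrable_const M)
      (hbase.mul hh)
      (Filter.Eventually.of_forall ?_)
    intro p
    by_cases hp : e p ∈ Zat a₁ b₁ a₂ b₂ pg psb
    · rw [Set.indicator_of_mem hp]
      simp only [Pi.one_apply, one_mul, Real.norm_eq_abs]
      exact hM _ hp.1
    · rw [Set.indicator_of_notMem hp, zero_mul, norm_zero]; exact hM0
  have hint2 : MeasureTheory.Integrable
      (fun p => (Zat a₁ b₁ a₂ b₂ pg psb).indicator (utAux t) (e p) * h p) ν := by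
    have hm : (fun p => (Zat a₁ b₁ a₂ b₂ pg psb).indicator (utAux t) (e p))
        = (e ⁻¹' Zat a₁ b₁ a₂ b₂ pg psb).indicator (fun p => utAux t (e p)) := by
      funext p
      by_cases hp : e p ∈ Zat a₁ b₁ a₂ b₂ pg psb
      · rw [Set.indicator_of_mem hp, Set.indicator_of_mem (by exact hp)]
      · rw [Set.indicator_of_notMem hp, Set.indicator_of_notMem (by exact hp)]
    have hmeasut : Measurable (fun p => utAux t (e p)) := by
      have : Continuous (utAux t) := continuous_const.max (continuous_fst.sub continuous_const)
      exact this.measurable.comp he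
    have hbase : MeasureTheory.AEStronglyMeasurable
        (fun p => (Zat a₁ b₁ a₂ b₂ pg psb).indicator (utAux t) (e p)) ν := by
      rw [hm]; exact (hmeasut.indicator (he hZmeas)).aestronglyMeasurable
    refine MeasureTheory.Integrable.mono' (MeasureTheory.integrable_const (max 0 (b₁ - t) * M))
      (hbase.mul hh)
      (Filter.Eventually.of_forall ?_)
    intro p
    by_cases hp : e p ∈ Zat a₁ b₁ a₂ b₂ pg psb
    · rw [Set.indicator_of_mem hp, Real.norm_eq_abs, abs_mul]
      have h1 : |utAux t (e p)| ≤ max 0 (b₁ - t) := by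
        rw [abs_of_nonneg (le_max_left _ _)]
        exact max_le_max le_rfl (by have := hp.1.1.2; linarith)
      exact mul_le_mul h1 (hM _ hp.1) (abs_nonneg _) (le_max_left _ _)
    · rw [Set.indicator_of_notMem hp, zero_mul, norm_zero]
      exact mul_nonneg (le_max_left _ _) hM0
  have hinner : ∀ p : α,
      (∫ s in Ioc t pg, (AsetAux a₁ b₁ a₂ b₂ pg psb s).indicator 1 (e p) * h p)
        = ((pg - t) * (Zat a₁ b₁ a₂ b₂ pg psb).indicator 1 (e p)
            - (Zat a₁ b₁ a₂ b₂ pg psb).indicator (utAux t) (e p)) * h p := by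
    intro p
    rw [← intervalIntegral.integral_of_le htp, intervalIntegral.integral_mul_const,
      pointwiseAux htp (e p)]
  constructor
  · rw [intervalIntegrable_iff_integrableOn_Ioc_of_le htp]
    exact hFint.integral_prod_left
  · calc (∫ s in t..pg, ∫ p, (AsetAux a₁ b₁ a₂ b₂ pg psb s).indicator 1 (e p) * h p ∂ν)
        = ∫ s in Ioc t pg, ∫ p, (AsetAux a₁ b₁ a₂ b₂ pg psb s).indicator 1 (e p) * h p ∂ν :=
          intervalIntegral.integral_of_le htp
      _ = ∫ p, (∫ s in Ioc t pg, (AsetAux a₁ b₁ a₂ b₂ pg psb s).indicator 1 (e p) * h p) ∂ν :=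
          MeasureTheory.integral_integral_swap hFint
      _ = ∫ p, ((pg - t) * (Zat a₁ b₁ a₂ b₂ pg psb).indicator 1 (e p)
            - (Zat a₁ b₁ a₂ b₂ pg psb).indicator (utAux t) (e p)) * h p ∂ν :=
          MeasureTheory.integral_congr_ae (Filter.Eventually.of_forall hinner)
      _ = ∫ p, ((pg - t) * ((Zat a₁ b₁ a₂ b₂ pg psb).indicator 1 (e p) * h p)
            - (Zat a₁ b₁ a₂ b₂ pg psb).indicator (utAux t) (e p) * h p) ∂ν := by
          congr 1; funext p; ring
      _ = (pg - t) * (∫ p, (Zat a₁ b₁ a₂ b₂ pg psb).indicator 1 (e p) * h p ∂ν)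
          - ∫ p, (Zat a₁ b₁ a₂ b₂ pg psb).indicator (utAux t) (e p) * h p ∂ν := by
          rw [MeasureTheory.integral_sub (hint1.const_mul _) hint2,
            MeasureTheory.integral_const_mul _ _]

end AuxProofs

noncomputable section AuxProofs2

lemma densContAux {U : Set (ℝ × ℝ)} (hU : IsOpen U) {f : ℝ × ℝ → ℝ}
    (hf : ContDiffOn ℝ 1 f U) (k : ℝ) : ContinuousOn (dens k f) U := by
  have hfd : ContinuousOn (fderiv ℝ f) U := hf.continuousOn_fderiv_of_isOpen hU le_rfl
  have hdiff : ∀ x ∈ U, DifferentiableAt ℝ f x := fun x hx =>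
    (hf.differentiableOn one_ne_zero).differentiableAt (hU.mem_nhds hx)
  have h1 : ∀ x ∈ U, d1 f x = (fderiv ℝ f x) (1, 0) := by
    intro x hx
    have h : HasFDerivAt f (fderiv ℝ f x) (x.1, x.2) := by
      rw [Prod.mk.eta]; exact (hdiff x hx).hasFDerivAt
    have hg : HasDerivAt (fun s : ℝ => (s, x.2)) ((1:ℝ), (0:ℝ)) x.1 :=
      (hasDerivAt_id x.1).prodMk (hasDerivAt_const x.1 x.2)
    exact (h.comp_hasDerivAt x.1 hg).deriv
  have h2 : ∀ x ∈ U, d2 f x = (fderiv ℝ f x) (0, 1) := by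
    intro x hx
    have h : HasFDerivAt f (fderiv ℝ f x) (x.1, x.2) := by
      rw [Prod.mk.eta]; exact (hdiff x hx).hasFDerivAt
    have hg : HasDerivAt (fun s : ℝ => (x.1, s)) ((0:ℝ), (1:ℝ)) x.2 :=
      (hasDerivAt_const x.2 x.1).prodMk (hasDerivAt_id x.2)
    exact (h.comp_hasDerivAt x.2 hg).deriv
  have hc1 : ContinuousOn (d1 f) U :=
    (hfd.clm_apply continuousOn_const).congr h1
  have hc2 : ContinuousOn (d2 f) U :=
    (hfd.clm_apply continuousOn_const).congr h2
  have hfc : ContinuousOn f U := hf.continuousOn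
  exact ((continuous_fst.continuousOn.mul hc1).add
      ((continuous_snd.continuousOn.add continuousOn_const).mul hc2)).add
    (continuousOn_const.mul hfc)

end AuxProofs2

noncomputable section AuxProofs3

lemma edgeIntAux {a₁ b₁ a₂ b₂ c d : ℝ} (hcd : c ≤ d)
    (e : ℝ → ℝ × ℝ) (he : Measurable e)
    {S : Set (ℝ × ℝ)} (hS : MeasurableSet S) (hSr : S ⊆ rect a₁ b₁ a₂ b₂)
    {w : ℝ × ℝ → ℝ} (hw : Measurable w) {B : ℝ} (hB0 : 0 ≤ B) (hwB : ∀ y ∈ S, |w y| ≤ B)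
    (h : ℝ → ℝ) (hh : MeasureTheory.AEStronglyMeasurable h (MeasureTheory.volume.restrict (Ioc c d)))
    {M : ℝ} (hM0 : 0 ≤ M) (hM : ∀ σ, e σ ∈ rect a₁ b₁ a₂ b₂ → |h σ| ≤ M) :
    IntervalIntegrable (fun σ => S.indicator w (e σ) * h σ) MeasureTheory.volume c d := by
  rw [intervalIntegrable_iff_integrableOn_Ioc_of_le hcd]
  haveI : MeasureTheory.IsFiniteMeasure (MeasureTheory.volume.restrict (Ioc c d)) := by
    constructor
    rw [MeasureTheory.Measure.restrict_apply_univ, Real.volume_Ioc]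
    exact ENNReal.ofReal_lt_top
  have hm : (fun σ => S.indicator w (e σ))
      = (e ⁻¹' S).indicator (fun σ => w (e σ)) := by
    funext σ
    by_cases hσ : e σ ∈ S
    · rw [Set.indicator_of_mem hσ, Set.indicator_of_mem (by exact hσ)]
    · rw [Set.indicator_of_notMem hσ, Set.indicator_of_notMem (by exact hσ)]
  have hbase : MeasureTheory.AEStronglyMeasurable (fun σ => S.indicator w (e σ))
      (MeasureTheory.volume.restrict (Ioc c d)) := by
    rw [hm]
    exact ((hw.comp he).indicator (he hS)).aestronglyMeasurable
  refine MeasureTheory.Integrable.mono' (MeasureTheory.integrable_const (B * M))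
    (hbase.mul hh) (Filter.Eventually.of_forall ?_)
  intro σ
  by_cases hσ : e σ ∈ S
  · rw [Set.indicator_of_mem hσ, Real.norm_eq_abs, abs_mul]
    exact mul_le_mul (hwB _ hσ) (hM _ (hSr hσ)) (abs_nonneg _) hB0
  · rw [Set.indicator_of_notMem hσ, zero_mul, norm_zero]
    exact mul_nonneg hB0 hM0

lemma muInt_expandAux (a₁ b₁ a₂ b₂ k : ℝ) (hab₁ : a₁ ≤ b₁) (hab₂ : a₂ ≤ b₂)
    (f g : ℝ × ℝ → ℝ)
    (II1 : IntervalIntegrable (fun σ => g (σ, a₂) * f (σ, a₂)) MeasureTheory.volume a₁ b₁)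
    (II2 : IntervalIntegrable (fun σ => g (σ, b₂) * f (σ, b₂)) MeasureTheory.volume a₁ b₁)
    (II3 : IntervalIntegrable (fun σ => g (b₁, σ) * f (b₁, σ)) MeasureTheory.volume a₂ b₂)
    (II4 : IntervalIntegrable (fun σ => g (a₁, σ) * f (a₁, σ)) MeasureTheory.volume a₂ b₂) :
    muInt a₁ b₁ a₂ b₂ k f g
      = g (a₁, a₂)
        - (a₂ + k) * (∫ σ in Ioc a₁ b₁, g (σ, a₂) * f (σ, a₂))
        - (a₂ + k) * ((b₁ - a₁) * (b₂ + k)) * (∫ σ in Ioc a₁ b₁, g (σ, b₂) * f (σ, b₂))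
        - (a₂ + k) * ((b₁ - a₁) * (b₂ + k)) * ((b₁ - a₁) * b₁) *
            (∫ σ in Ioc a₂ b₂, g (b₁, σ) * f (b₁, σ))
        + (a₂ + k) * ((b₁ - a₁) * (b₂ + k)) * ((b₁ - a₁) * b₁) * ((b₂ - a₂) * a₁) *
            (∫ σ in Ioc a₂ b₂, g (a₁, σ) * f (a₁, σ))
        - (a₂ + k) * ((b₁ - a₁) * (b₂ + k)) * ((b₁ - a₁) * b₁) * ((b₂ - a₂) * a₁) * (b₂ - a₂) *
            (∫ x in rect a₁ b₁ a₂ b₂, g x * dens k f x) := by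
  unfold muInt
  rw [intervalIntegral.integral_sub II4 intervalIntegrable_const]
  rw [intervalIntegral.integral_sub II3 intervalIntegrable_const]
  rw [intervalIntegral.integral_add II2 intervalIntegrable_const]
  rw [intervalIntegral.integral_add II1 intervalIntegrable_const]
  simp only [intervalIntegral.integral_const, smul_eq_mul]
  rw [intervalIntegral.integral_of_le hab₁, intervalIntegral.integral_of_le hab₁,
    intervalIntegral.integral_of_le hab₂, intervalIntegral.integral_of_le hab₂]
  ring

end AuxProofs3

/-- Proposition 3: necessary conditions for optimality of the Ad-Tiered Posted Price. -/
theorem stmt15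
    (a₁ b₁ a₂ b₂ : ℝ) (ha₁ : 0 ≤ a₁) (hab₁ : a₁ < b₁) (hab₂ : a₂ < b₂) (hb₂ : b₂ ≤ 0)
    (U : Set (ℝ × ℝ)) (hU : IsOpen U) (hXU : rect a₁ b₁ a₂ b₂ ⊆ U)
    (f : ℝ × ℝ → ℝ) (hf : ContDiffOn ℝ 1 f U)
    (hfbd : ∃ C, ∀ x ∈ U, |d1 f x| ≤ C ∧ |d2 f x| ≤ C)
    (hfpos : ∀ x ∈ rect a₁ b₁ a₂ b₂, 0 < f x)
    (hfint : (∫ x in rect a₁ b₁ a₂ b₂, f x) = 1)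
    (k : ℝ) (hk : 0 ≤ k)
    (pg psb : ℝ) (hpg : pg ∈ Ioo a₁ b₁)
    (hpsb₁ : pg + a₂ ≤ psb) (hpsb₂ : psb ≤ min pg (a₁ + b₂))
    (HZ : ∀ u : ℝ × ℝ → ℝ,
      ContinuousOn u (rect a₁ b₁ a₂ b₂) → ConvexOn ℝ (rect a₁ b₁ a₂ b₂) u →
      IncAlong1 (rect a₁ b₁ a₂ b₂) u → IncAlong2 (rect a₁ b₁ a₂ b₂) u →
      muInt a₁ b₁ a₂ b₂ k f ((Zat a₁ b₁ a₂ b₂ pg psb).indicator u) ≤ 0)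
    (HW : ∀ u : ℝ × ℝ → ℝ,
      ContinuousOn u (rect a₁ b₁ a₂ b₂) → ConvexOn ℝ (rect a₁ b₁ a₂ b₂) u →
      DecAlong1 (rect a₁ b₁ a₂ b₂) u → IncAlong2 (rect a₁ b₁ a₂ b₂) u →
      muInt a₁ b₁ a₂ b₂ k f ((Wat a₁ b₁ a₂ b₂ pg psb).indicator u) ≤ 0)
    (HY : ∀ u : ℝ × ℝ → ℝ,
      ContinuousOn u (rect a₁ b₁ a₂ b₂) → ConvexOn ℝ (rect a₁ b₁ a₂ b₂) u →
      DecAlong1 (rect a₁ b₁ a₂ b₂) u → DecAlong2 (rect a₁ b₁ a₂ b₂) u →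
      muInt a₁ b₁ a₂ b₂ k f ((Yat a₁ b₁ a₂ b₂ pg psb).indicator u) ≤ 0) :
    muSet a₁ b₁ a₂ b₂ k f (Zat a₁ b₁ a₂ b₂ pg psb) = 0 ∧
    muSet a₁ b₁ a₂ b₂ k f (Wat a₁ b₁ a₂ b₂ pg psb) = 0 ∧
    muSet a₁ b₁ a₂ b₂ k f (Yat a₁ b₁ a₂ b₂ pg psb) = 0 ∧
    ∀ t ∈ Icc a₁ pg, 0 ≤ ∫ s in t..pg, MZat a₁ b₁ a₂ b₂ k f pg psb s := by
  obtain ⟨hpga, hpgb⟩ := hpg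
  have hab₁' : a₁ ≤ b₁ := hab₁.le
  have hab₂' : a₂ ≤ b₂ := hab₂.le
  have hconvX : Convex ℝ (rect a₁ b₁ a₂ b₂) := (convex_Icc _ _).prod (convex_Icc _ _)
  have hrectmeas : MeasurableSet (rect a₁ b₁ a₂ b₂) := measurableSet_Icc.prod measurableSet_Icc
  have hrectcpt : IsCompact (rect a₁ b₁ a₂ b₂) := isCompact_Icc.prod isCompact_Icc
  have hfc : ContinuousOn f U := hf.continuousOn
  haveI hfin1 : IsFiniteMeasure (volume.restrict (Ioc a₁ b₁)) := by
    constructor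
    rw [Measure.restrict_apply_univ, Real.volume_Ioc]
    exact ENNReal.ofReal_lt_top
  haveI hfin2 : IsFiniteMeasure (volume.restrict (Ioc a₂ b₂)) := by
    constructor
    rw [Measure.restrict_apply_univ, Real.volume_Ioc]
    exact ENNReal.ofReal_lt_top
  haveI hfin3 : IsFiniteMeasure (volume.restrict (rect a₁ b₁ a₂ b₂)) := by
    constructor
    rw [Measure.restrict_apply_univ]
    exact hrectcpt.measure_lt_top
  have hm1 : ∀ σ ∈ Icc a₁ b₁, ((σ : ℝ), a₂) ∈ rect a₁ b₁ a₂ b₂ :=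
    fun σ hσ => ⟨hσ, ⟨le_refl a₂, hab₂'⟩⟩
  have hm2 : ∀ σ ∈ Icc a₁ b₁, ((σ : ℝ), b₂) ∈ rect a₁ b₁ a₂ b₂ :=
    fun σ hσ => ⟨hσ, ⟨hab₂', le_refl b₂⟩⟩
  have hm3 : ∀ σ ∈ Icc a₂ b₂, ((b₁ : ℝ), σ) ∈ rect a₁ b₁ a₂ b₂ :=
    fun σ hσ => ⟨⟨hab₁', le_refl b₁⟩, hσ⟩
  have hm4 : ∀ σ ∈ Icc a₂ b₂, ((a₁ : ℝ), σ) ∈ rect a₁ b₁ a₂ b₂ :=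
    fun σ hσ => ⟨⟨le_refl a₁, hab₁'⟩, hσ⟩
  have hfe1 : AEStronglyMeasurable (fun σ => f (σ, a₂)) (volume.restrict (Ioc a₁ b₁)) := by
    have hc : ContinuousOn (fun σ : ℝ => f (σ, a₂)) (Icc a₁ b₁) :=
      hfc.comp ((continuous_id.prodMk continuous_const).continuousOn)
        (fun σ hσ => hXU (hm1 σ hσ))
    exact (hc.mono Ioc_subset_Icc_self).aestronglyMeasurable measurableSet_Ioc
  have hfe2 : AEStronglyMeasurable (fun σ => f (σ, b₂)) (volume.restrict (Ioc a₁ b₁)) := by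
    have hc : ContinuousOn (fun σ : ℝ => f (σ, b₂)) (Icc a₁ b₁) :=
      hfc.comp ((continuous_id.prodMk continuous_const).continuousOn)
        (fun σ hσ => hXU (hm2 σ hσ))
    exact (hc.mono Ioc_subset_Icc_self).aestronglyMeasurable measurableSet_Ioc
  have hfe3 : AEStronglyMeasurable (fun σ => f (b₁, σ)) (volume.restrict (Ioc a₂ b₂)) := by
    have hc : ContinuousOn (fun σ : ℝ => f (b₁, σ)) (Icc a₂ b₂) :=
      hfc.comp ((continuous_const.prodMk continuous_id).continuousOn)
        (fun σ hσ => hXU (hm3 σ hσ))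
    exact (hc.mono Ioc_subset_Icc_self).aestronglyMeasurable measurableSet_Ioc
  have hfe4 : AEStronglyMeasurable (fun σ => f (a₁, σ)) (volume.restrict (Ioc a₂ b₂)) := by
    have hc : ContinuousOn (fun σ : ℝ => f (a₁, σ)) (Icc a₂ b₂) :=
      hfc.comp ((continuous_const.prodMk continuous_id).continuousOn)
        (fun σ hσ => hXU (hm4 σ hσ))
    exact (hc.mono Ioc_subset_Icc_self).aestronglyMeasurable measurableSet_Ioc
  have hdensC : ContinuousOn (dens k f) (rect a₁ b₁ a₂ b₂) := (densContAux hU hf k).mono hXU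
  have hdensM : AEStronglyMeasurable (dens k f) (volume.restrict (rect a₁ b₁ a₂ b₂)) :=
    hdensC.aestronglyMeasurable hrectmeas
  obtain ⟨Mf0, hMf0⟩ := hrectcpt.exists_bound_of_continuousOn (hfc.mono hXU)
  obtain ⟨Md0, hMd0⟩ := hrectcpt.exists_bound_of_continuousOn hdensC
  have hMf : ∀ x ∈ rect a₁ b₁ a₂ b₂, |f x| ≤ max Mf0 0 :=
    fun x hx => le_trans (hMf0 x hx) (le_max_left _ _)
  have hMd : ∀ x ∈ rect a₁ b₁ a₂ b₂, |dens k f x| ≤ max Md0 0 :=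
    fun x hx => le_trans (hMd0 x hx) (le_max_left _ _)
  have hMf0' : (0:ℝ) ≤ max Mf0 0 := le_max_right _ _
  have hMd0' : (0:ℝ) ≤ max Md0 0 := le_max_right _ _
  have hZm := measurableSet_ZatAux a₁ b₁ a₂ b₂ pg psb
  have hZr : Zat a₁ b₁ a₂ b₂ pg psb ⊆ rect a₁ b₁ a₂ b₂ := fun x hx => hx.1
  have hWm : MeasurableSet (Wat a₁ b₁ a₂ b₂ pg psb) := by
    have h : Wat a₁ b₁ a₂ b₂ pg psb =
        rect a₁ b₁ a₂ b₂ ∩ ({x : ℝ × ℝ | pg < x.1} ∩ {x : ℝ × ℝ | x.2 ≤ psb - pg}) := by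
      ext x
      simp only [Wat, Set.mem_sep_iff, Set.mem_inter_iff, Set.mem_setOf_eq]
      try tauto
    rw [h]
    exact hrectmeas.inter ((measurableSet_lt measurable_const measurable_fst).inter
      (measurableSet_le measurable_snd measurable_const))
  have hWr : Wat a₁ b₁ a₂ b₂ pg psb ⊆ rect a₁ b₁ a₂ b₂ := fun x hx => hx.1
  have hYm : MeasurableSet (Yat a₁ b₁ a₂ b₂ pg psb) := hrectmeas.diff (hZm.union hWm)
  have hYr : Yat a₁ b₁ a₂ b₂ pg psb ⊆ rect a₁ b₁ a₂ b₂ := fun x hx => hx.1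
  -- generic edge integrabilities
  have IIgen : ∀ S : Set (ℝ × ℝ), MeasurableSet S → S ⊆ rect a₁ b₁ a₂ b₂ →
      ∀ w : ℝ × ℝ → ℝ, Measurable w → ∀ B : ℝ, 0 ≤ B → (∀ y ∈ S, |w y| ≤ B) →
      IntervalIntegrable (fun σ => S.indicator w (σ, a₂) * f (σ, a₂)) volume a₁ b₁ ∧
      IntervalIntegrable (fun σ => S.indicator w (σ, b₂) * f (σ, b₂)) volume a₁ b₁ ∧
      IntervalIntegrable (fun σ => S.indicator w (b₁, σ) * f (b₁, σ)) volume a₂ b₂ ∧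
      IntervalIntegrable (fun σ => S.indicator w (a₁, σ) * f (a₁, σ)) volume a₂ b₂ := by
    intro S hS hSr w hw B hB0 hwB
    exact ⟨edgeIntAux hab₁' (fun σ : ℝ => (σ, a₂)) (measurable_id.prodMk measurable_const)
        hS hSr hw hB0 hwB (fun σ => f (σ, a₂)) hfe1 hMf0' (fun σ hσ => hMf _ hσ),
      edgeIntAux hab₁' (fun σ : ℝ => (σ, b₂)) (measurable_id.prodMk measurable_const)
        hS hSr hw hB0 hwB (fun σ => f (σ, b₂)) hfe2 hMf0' (fun σ hσ => hMf _ hσ),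
      edgeIntAux hab₂' (fun σ : ℝ => (b₁, σ)) (measurable_const.prodMk measurable_id)
        hS hSr hw hB0 hwB (fun σ => f (b₁, σ)) hfe3 hMf0' (fun σ hσ => hMf _ hσ),
      edgeIntAux hab₂' (fun σ : ℝ => (a₁, σ)) (measurable_const.prodMk measurable_id)
        hS hSr hw hB0 hwB (fun σ => f (a₁, σ)) hfe4 hMf0' (fun σ hσ => hMf _ hσ)⟩
  -- part (i)
  have hmuA : ∀ S : Set (ℝ × ℝ), MeasurableSet S → S ⊆ rect a₁ b₁ a₂ b₂ →
      muInt a₁ b₁ a₂ b₂ k f (S.indicator fun _ => (1:ℝ)) ≤ 0 →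
      muInt a₁ b₁ a₂ b₂ k f (S.indicator fun _ => (-1:ℝ)) ≤ 0 →
      muSet a₁ b₁ a₂ b₂ k f S = 0 := by
    intro S hS hSr h1 h2
    obtain ⟨J1, J2, J3, J4⟩ := IIgen S hS hSr 1 measurable_const 1 zero_le_one
      (fun y _ => by simp)
    obtain ⟨K1, K2, K3, K4⟩ := IIgen S hS hSr (fun _ => (-1:ℝ)) measurable_const 1 zero_le_one
      (fun y _ => by norm_num)
    have h1' : muInt a₁ b₁ a₂ b₂ k f (S.indicator 1) ≤ 0 := h1
    have hneg_pt : ∀ y : ℝ × ℝ, S.indicator (fun _ => (-1:ℝ)) y = - S.indicator 1 y := by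
      intro y
      by_cases hy : y ∈ S
      · rw [Set.indicator_of_mem hy, Set.indicator_of_mem hy, Pi.one_apply]
      · rw [Set.indicator_of_notMem hy, Set.indicator_of_notMem hy, neg_zero]
    have eneg : muInt a₁ b₁ a₂ b₂ k f (S.indicator fun _ => (-1:ℝ))
        = - muInt a₁ b₁ a₂ b₂ k f (S.indicator 1) := by
      rw [muInt_expandAux a₁ b₁ a₂ b₂ k hab₁' hab₂' f (S.indicator fun _ => (-1:ℝ)) K1 K2 K3 K4,
        muInt_expandAux a₁ b₁ a₂ b₂ k hab₁' hab₂' f (S.indicator 1) J1 J2 J3 J4]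
      simp only [hneg_pt, neg_mul, MeasureTheory.integral_neg]
      ring
    rw [eneg] at h2
    unfold muSet
    linarith
  have hZ0 : muSet a₁ b₁ a₂ b₂ k f (Zat a₁ b₁ a₂ b₂ pg psb) = 0 :=
    hmuA _ hZm hZr
      (HZ (fun _ => (1:ℝ)) continuousOn_const (convexOn_const _ hconvX)
        (fun _ _ _ _ _ _ => le_rfl) (fun _ _ _ _ _ _ => le_rfl))
      (HZ (fun _ => (-1:ℝ)) continuousOn_const (convexOn_const _ hconvX)
        (fun _ _ _ _ _ _ => le_rfl) (fun _ _ _ _ _ _ => le_rfl))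
  have hW0 : muSet a₁ b₁ a₂ b₂ k f (Wat a₁ b₁ a₂ b₂ pg psb) = 0 :=
    hmuA _ hWm hWr
      (HW (fun _ => (1:ℝ)) continuousOn_const (convexOn_const _ hconvX)
        (fun _ _ _ _ _ _ => le_rfl) (fun _ _ _ _ _ _ => le_rfl))
      (HW (fun _ => (-1:ℝ)) continuousOn_const (convexOn_const _ hconvX)
        (fun _ _ _ _ _ _ => le_rfl) (fun _ _ _ _ _ _ => le_rfl))
  have hY0 : muSet a₁ b₁ a₂ b₂ k f (Yat a₁ b₁ a₂ b₂ pg psb) = 0 :=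
    hmuA _ hYm hYr
      (HY (fun _ => (1:ℝ)) continuousOn_const (convexOn_const _ hconvX)
        (fun _ _ _ _ _ _ => le_rfl) (fun _ _ _ _ _ _ => le_rfl))
      (HY (fun _ => (-1:ℝ)) continuousOn_const (convexOn_const _ hconvX)
        (fun _ _ _ _ _ _ => le_rfl) (fun _ _ _ _ _ _ => le_rfl))
  refine ⟨hZ0, hW0, hY0, ?_⟩
  -- part (ii)
  intro t ht
  obtain ⟨hta, htp'⟩ := ht
  -- feasibility of u_t
  have hcontu : ContinuousOn (utAux t) (rect a₁ b₁ a₂ b₂) :=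
    (continuous_const.max (continuous_fst.sub continuous_const)).continuousOn
  have hconvu : ConvexOn ℝ (rect a₁ b₁ a₂ b₂) (utAux t) := by
    have haff : ConvexOn ℝ (rect a₁ b₁ a₂ b₂) (fun x : ℝ × ℝ => x.1 - t) := by
      refine ⟨hconvX, fun x _ y _ a b ha hb hab => ?_⟩
      simp only [Prod.fst_add, Prod.smul_fst, smul_eq_mul]
      have h : a * (x.1 - t) + b * (y.1 - t) = a * x.1 + b * y.1 - (a + b) * t := by ring
      rw [h, hab, one_mul]
    have h0 : ConvexOn ℝ (rect a₁ b₁ a₂ b₂) (fun _ : ℝ × ℝ => (0:ℝ)) :=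
      convexOn_const 0 hconvX
    have hsup := h0.sup haff
    have heq : utAux t = ((fun _ : ℝ × ℝ => (0:ℝ)) ⊔ fun x : ℝ × ℝ => x.1 - t) := by
      funext x
      simp [utAux, Pi.sup_apply]
    rw [heq]
    exact hsup
  have hinc1 : IncAlong1 (rect a₁ b₁ a₂ b₂) (utAux t) :=
    fun s s' τ _ _ hss => max_le_max le_rfl (sub_le_sub_right hss t)
  have hinc2 : IncAlong2 (rect a₁ b₁ a₂ b₂) (utAux t) := fun s τ τ' _ _ _ => le_rfl
  have hfeas := HZ (utAux t) hcontu hconvu hinc1 hinc2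
  -- integrabilities for Z with weights 1 and u_t
  obtain ⟨Z1, Z2, Z3, Z4⟩ := IIgen _ hZm hZr 1 measurable_const 1 zero_le_one
    (fun y _ => by simp)
  have hut_meas : Measurable (utAux t) :=
    (continuous_const.max (continuous_fst.sub continuous_const)).measurable
  have hutB : ∀ y ∈ Zat a₁ b₁ a₂ b₂ pg psb, |utAux t y| ≤ max 0 (b₁ - t) := by
    intro y hy
    rw [abs_of_nonneg (le_max_left _ _)]
    exact max_le_max le_rfl (by have := (hZr hy).1.2; linarith)
  obtain ⟨U1, U2, U3, U4⟩ := IIgen _ hZm hZr (utAux t) hut_meas (max 0 (b₁ - t))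
    (le_max_left _ _) hutB
  -- integrabilities for the truncated sets
  have hAm : ∀ s : ℝ, MeasurableSet (AsetAux a₁ b₁ a₂ b₂ pg psb s) :=
    fun s => (measurableSet_Icc.prod measurableSet_Icc).inter hZm
  have hAr : ∀ s : ℝ, AsetAux a₁ b₁ a₂ b₂ pg psb s ⊆ rect a₁ b₁ a₂ b₂ :=
    fun s x hx => hZr hx.2
  have IIA := fun s : ℝ => IIgen _ (hAm s) (hAr s) 1 measurable_const 1 zero_le_one
    (fun y _ => by simp)
  -- the five Fubini identities
  have m1 := masterAux (psb := psb) (volume.restrict (Ioc a₁ b₁)) htp' (fun σ : ℝ => (σ, a₂))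
    (measurable_id.prodMk measurable_const) (fun σ => f (σ, a₂)) hfe1 (max Mf0 0) hMf0'
    (fun σ hσ => hMf _ hσ)
  have m2 := masterAux (psb := psb) (volume.restrict (Ioc a₁ b₁)) htp' (fun σ : ℝ => (σ, b₂))
    (measurable_id.prodMk measurable_const) (fun σ => f (σ, b₂)) hfe2 (max Mf0 0) hMf0'
    (fun σ hσ => hMf _ hσ)
  have m3 := masterAux (psb := psb) (volume.restrict (Ioc a₂ b₂)) htp' (fun σ : ℝ => (b₁, σ))
    (measurable_const.prodMk measurable_id) (fun σ => f (b₁, σ)) hfe3 (max Mf0 0) hMf0'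
    (fun σ hσ => hMf _ hσ)
  have m4 := masterAux (psb := psb) (volume.restrict (Ioc a₂ b₂)) htp' (fun σ : ℝ => (a₁, σ))
    (measurable_const.prodMk measurable_id) (fun σ => f (a₁, σ)) hfe4 (max Mf0 0) hMf0'
    (fun σ hσ => hMf _ hσ)
  have m5 := masterAux (psb := psb) (volume.restrict (rect a₁ b₁ a₂ b₂)) htp' (fun x : ℝ × ℝ => x)
    measurable_id (dens k f) hdensM (max Md0 0) hMd0' (fun x hx => hMd _ hx)
  have iA0 : IntervalIntegrable
      (fun s => (AsetAux a₁ b₁ a₂ b₂ pg psb s).indicator (1 : ℝ × ℝ → ℝ) (a₁, a₂))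
      volume t pg := (monoAux a₁ b₁ a₂ b₂ pg psb (a₁, a₂)).intervalIntegrable
  have hcomp : (∫ s in t..pg, MZat a₁ b₁ a₂ b₂ k f pg psb s)
      = (pg - t) * muSet a₁ b₁ a₂ b₂ k f (Zat a₁ b₁ a₂ b₂ pg psb)
        - muInt a₁ b₁ a₂ b₂ k f ((Zat a₁ b₁ a₂ b₂ pg psb).indicator (utAux t)) := by
    have step1 : (∫ s in t..pg, MZat a₁ b₁ a₂ b₂ k f pg psb s)
        = ∫ s in t..pg, ((AsetAux a₁ b₁ a₂ b₂ pg psb s).indicator 1 (a₁, a₂)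
        - (a₂ + k) * (∫ σ in Ioc a₁ b₁, (AsetAux a₁ b₁ a₂ b₂ pg psb s).indicator 1 (σ, a₂) * f (σ, a₂))
        - (a₂ + k) * ((b₁ - a₁) * (b₂ + k)) * (∫ σ in Ioc a₁ b₁, (AsetAux a₁ b₁ a₂ b₂ pg psb s).indicator 1 (σ, b₂) * f (σ, b₂))
        - (a₂ + k) * ((b₁ - a₁) * (b₂ + k)) * ((b₁ - a₁) * b₁) *
            (∫ σ in Ioc a₂ b₂, (AsetAux a₁ b₁ a₂ b₂ pg psb s).indicator 1 (b₁, σ) * f (b₁, σ))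
        + (a₂ + k) * ((b₁ - a₁) * (b₂ + k)) * ((b₁ - a₁) * b₁) * ((b₂ - a₂) * a₁) *
            (∫ σ in Ioc a₂ b₂, (AsetAux a₁ b₁ a₂ b₂ pg psb s).indicator 1 (a₁, σ) * f (a₁, σ))
        - (a₂ + k) * ((b₁ - a₁) * (b₂ + k)) * ((b₁ - a₁) * b₁) * ((b₂ - a₂) * a₁) * (b₂ - a₂) *
            (∫ x in rect a₁ b₁ a₂ b₂, (AsetAux a₁ b₁ a₂ b₂ pg psb s).indicator 1 x * dens k f x)) :=
      intervalIntegral.integral_congr (fun s _ =>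
        muInt_expandAux a₁ b₁ a₂ b₂ k hab₁' hab₂' f
          ((AsetAux a₁ b₁ a₂ b₂ pg psb s).indicator 1)
          (IIA s).1 (IIA s).2.1 (IIA s).2.2.1 (IIA s).2.2.2)
    rw [step1]
    rw [intervalIntegral.integral_sub
      (((((iA0.sub (m1.1.const_mul _)).sub (m2.1.const_mul _)).sub
        (m3.1.const_mul _)).add (m4.1.const_mul _))) (m5.1.const_mul _)]
    rw [intervalIntegral.integral_add
      ((((iA0.sub (m1.1.const_mul _)).sub (m2.1.const_mul _)).sub
        (m3.1.const_mul _))) (m4.1.const_mul _)]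
    rw [intervalIntegral.integral_sub
      (((iA0.sub (m1.1.const_mul _)).sub (m2.1.const_mul _))) (m3.1.const_mul _)]
    rw [intervalIntegral.integral_sub ((iA0.sub (m1.1.const_mul _))) (m2.1.const_mul _)]
    rw [intervalIntegral.integral_sub iA0 (m1.1.const_mul _)]
    rw [intervalIntegral.integral_const_mul, intervalIntegral.integral_const_mul,
      intervalIntegral.integral_const_mul, intervalIntegral.integral_const_mul,
      intervalIntegral.integral_const_mul]
    rw [pointwiseAux htp' ((a₁, a₂) : ℝ × ℝ), m1.2, m2.2, m3.2, m4.2, m5.2]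
    unfold muSet
    rw [muInt_expandAux a₁ b₁ a₂ b₂ k hab₁' hab₂' f
        ((Zat a₁ b₁ a₂ b₂ pg psb).indicator 1) Z1 Z2 Z3 Z4,
      muInt_expandAux a₁ b₁ a₂ b₂ k hab₁' hab₂' f
        ((Zat a₁ b₁ a₂ b₂ pg psb).indicator (utAux t)) U1 U2 U3 U4]
    ring
  rw [hcomp, hZ0, mul_zero, zero_sub]
  exact neg_nonneg.mpr hfeas
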